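/- For every n ≥ 2, the assignment φ(f_1) = (e_1 + e_{1̄})/2 and φ(f_k) = e_k for 2 ≤ k ≤ 2n, where f_1, …, f_{2n} are the generators of 𝔢_{C_{2n}}, extends to a well-defined Lie algebra homomorphism φ : 𝔢_{C_{2n}} → 𝔢_{D_{2n+1}}. -/

import Mathlib

noncomputable section

open FreeLieAlgebra Matrix

abbrev FL (n : ℕ) : Type := FreeLieAlgebra ℂ (Fin n)

/-- Defining relations of the type `C` electrical Lie algebra (index `i` ↔ generator
`e_{i+1}`). -/
def relC (n : ℕ) : Set (FL n) :=
  {x | ∃ i j : Fin n, ((i : ℕ) + 2 ≤ (j : ℕ) ∨ (j : ℕ) + 2 ≤ (i : ℕ)) ∧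
        x = ⁅of ℂ i, of ℂ j⁆} ∪
  {x | ∃ i j : Fin n, ((i : ℕ) + 1 = (j : ℕ) ∨ (j : ℕ) + 1 = (i : ℕ)) ∧ (i : ℕ) ≠ 0 ∧
        x = ⁅of ℂ i, ⁅of ℂ i, of ℂ j⁆⁆ + (2 : ℂ) • of ℂ i} ∪
  {x | ∃ i j : Fin n, (i : ℕ) = 0 ∧ (j : ℕ) = 1 ∧
        x = ⁅of ℂ i, ⁅of ℂ i, ⁅of ℂ i, of ℂ j⁆⁆⁆}

/-- The electrical Lie algebra of type `C_n`. -/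
abbrev eC (n : ℕ) : Type := FL n ⧸ LieSubmodule.lieSpan ℂ (FL n) (relC n)

/-- The generator `e_{i+1}` of `eC n`. -/
def gC (n : ℕ) (i : Fin n) : eC n :=
  LieSubmodule.Quotient.mk' (LieSubmodule.lieSpan ℂ (FL n) (relC n)) (of ℂ i)

/-- The generators of `eC n` as a function on `1`-based labels `1, …, n` (and junk value `0`
outside this range). -/
def gC' (n : ℕ) (k : ℕ) : eC n :=
  if h : 1 ≤ k ∧ k ≤ n then gC n ⟨k - 1, by omega⟩ else 0

/-- Defining relations of the type `D` electrical Lie algebra with generators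
`e_{1̄}, e_1, e_2, …, e_{n-1}`; index `0` corresponds to `e_{1̄}` and index `i ≥ 1`
corresponds to `e_i`. -/
def relD (n : ℕ) : Set (FL n) :=
  {x | ∃ i j : Fin n, ((i : ℕ) = 0 ∨ (i : ℕ) = 1) ∧ (j : ℕ) = 2 ∧
        x = ⁅of ℂ i, ⁅of ℂ i, of ℂ j⁆⁆ + (2 : ℂ) • of ℂ i} ∪
  {x | ∃ i j : Fin n, (i : ℕ) = 2 ∧ ((j : ℕ) = 0 ∨ (j : ℕ) = 1) ∧
        x = ⁅of ℂ i, ⁅of ℂ i, of ℂ j⁆⁆ + (2 : ℂ) • of ℂ i} ∪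
  {x | ∃ i j : Fin n, (i : ℕ) = 0 ∧ (j : ℕ) = 1 ∧ x = ⁅of ℂ i, of ℂ j⁆} ∪
  {x | ∃ i j : Fin n, (i : ℕ) ≤ 1 ∧ 3 ≤ (j : ℕ) ∧ x = ⁅of ℂ i, of ℂ j⁆} ∪
  {x | ∃ i j : Fin n, 2 ≤ (i : ℕ) ∧ 2 ≤ (j : ℕ) ∧
        ((i : ℕ) + 1 = (j : ℕ) ∨ (j : ℕ) + 1 = (i : ℕ)) ∧
        x = ⁅of ℂ i, ⁅of ℂ i, of ℂ j⁆⁆ + (2 : ℂ) • of ℂ i} ∪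
  {x | ∃ i j : Fin n, 2 ≤ (i : ℕ) ∧ 2 ≤ (j : ℕ) ∧
        ((i : ℕ) + 2 ≤ (j : ℕ) ∨ (j : ℕ) + 2 ≤ (i : ℕ)) ∧ x = ⁅of ℂ i, of ℂ j⁆}

/-- The electrical Lie algebra of type `D_n` (on `n` generators `e_{1̄}, e_1, …, e_{n-1}`). -/
abbrev eD (n : ℕ) : Type := FL n ⧸ LieSubmodule.lieSpan ℂ (FL n) (relD n)

/-- The generators of `eD n`: `gD n 0 = e_{1̄}` and `gD n i = e_i` for `i ≥ 1`. -/
def gD (n : ℕ) (i : Fin n) : eD n :=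
  LieSubmodule.Quotient.mk' (LieSubmodule.lieSpan ℂ (FL n) (relD n)) (of ℂ i)


/-- Lift a Lie algebra morphism through a quotient by an ideal contained in its kernel. -/
def lieQuotLift {R L L' : Type*} [CommRing R] [LieRing L] [LieAlgebra R L]
    [LieRing L'] [LieAlgebra R L'] (I : LieIdeal R L) (f : L →ₗ⁅R⁆ L')
    (h : ∀ x ∈ I, f x = 0) : (L ⧸ I) →ₗ⁅R⁆ L' :=
  { (I : Submodule R L).liftQ f.toLinearMap (fun x hx => LinearMap.mem_ker.2 (h x hx)) with
    map_lie' := by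
      rintro ⟨x⟩ ⟨y⟩
      exact f.map_lie x y }

lemma lieQuotLift_mk {R L L' : Type*} [CommRing R] [LieRing L] [LieAlgebra R L]
    [LieRing L'] [LieAlgebra R L'] (I : LieIdeal R L) (f : L →ₗ⁅R⁆ L')
    (h : ∀ x ∈ I, f x = 0) (x : L) :
    lieQuotLift I f h (LieSubmodule.Quotient.mk' I x) = f x := rfl

/-- The image of the generators of `eC (2n)` in `eD (2n+1)`. -/
def vmap (n : ℕ) : Fin (2 * n) → eD (2 * n + 1) := fun i =>
  if (i : ℕ) = 0 then
    (2⁻¹ : ℂ) • (gD (2 * n + 1) ⟨1, by have := i.isLt; omega⟩ + gD (2 * n + 1) ⟨0, by have := i.isLt; omega⟩)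
  else gD (2 * n + 1) ⟨(i : ℕ) + 1, Nat.succ_lt_succ i.isLt⟩

section relations

variable (n : ℕ)

lemma relD_mk_zero : ∀ x ∈ relD n,
    (LieSubmodule.Quotient.mk' (LieSubmodule.lieSpan ℂ (FL n) (relD n)) x : eD n) = 0 :=
  fun _ hx => (LieSubmodule.Quotient.mk_eq_zero _).2 (LieSubmodule.subset_lieSpan hx)

lemma mkD_bracket (x y : FL n) :
    LieSubmodule.Quotient.mk' (LieSubmodule.lieSpan ℂ (FL n) (relD n)) ⁅x, y⁆ =
      ⁅(LieSubmodule.Quotient.mk' (LieSubmodule.lieSpan ℂ (FL n) (relD n)) x : eD n),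
        LieSubmodule.Quotient.mk' (LieSubmodule.lieSpan ℂ (FL n) (relD n)) y⁆ := rfl

lemma gD_bz {i j : Fin n} (h : ⁅of ℂ i, of ℂ j⁆ ∈ relD n) :
    ⁅gD n i, gD n j⁆ = 0 := by
  have h0 := relD_mk_zero n _ h
  rw [mkD_bracket] at h0
  exact h0

lemma gD_serre {i j : Fin n}
    (h : ⁅of ℂ i, ⁅of ℂ i, of ℂ j⁆⁆ + (2 : ℂ) • of ℂ i ∈ relD n) :
    ⁅gD n i, ⁅gD n i, gD n j⁆⁆ = -((2 : ℂ) • gD n i) := by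
  have h0 := relD_mk_zero n _ h
  rw [map_add, map_smul, mkD_bracket, mkD_bracket] at h0
  exact eq_neg_of_add_eq_zero_left h0

end relations

theorem stmt16 (n : ℕ) (hn : 2 ≤ n) :
    ∃ φ : eC (2 * n) →ₗ⁅ℂ⁆ eD (2 * n + 1),
      φ (gC (2 * n) ⟨0, by omega⟩) =
        (2⁻¹ : ℂ) • (gD (2 * n + 1) ⟨1, by omega⟩ + gD (2 * n + 1) ⟨0, by omega⟩) ∧
      ∀ k : ℕ, 2 ≤ k → (hk : k ≤ 2 * n) →
        φ (gC (2 * n) ⟨k - 1, by omega⟩) = gD (2 * n + 1) ⟨k, by omega⟩ := by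
  set m := 2 * n + 1 with hm
  -- relation lemmas in eD m
  have hz3 : ∀ i j : Fin m, (i : ℕ) = 0 → (j : ℕ) = 1 → ⁅gD m i, gD m j⁆ = 0 := by
    intro i j hi hj
    exact gD_bz m (Or.inl (Or.inl (Or.inl (Or.inr ⟨i, j, hi, hj, rfl⟩))))
  have hz4 : ∀ i j : Fin m, (i : ℕ) ≤ 1 → 3 ≤ (j : ℕ) → ⁅gD m i, gD m j⁆ = 0 := by
    intro i j hi hj
    exact gD_bz m (Or.inl (Or.inl (Or.inr ⟨i, j, hi, hj, rfl⟩)))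
  have hz6 : ∀ i j : Fin m, 2 ≤ (i : ℕ) → 2 ≤ (j : ℕ) →
      ((i : ℕ) + 2 ≤ (j : ℕ) ∨ (j : ℕ) + 2 ≤ (i : ℕ)) → ⁅gD m i, gD m j⁆ = 0 := by
    intro i j hi hj hg
    exact gD_bz m (Or.inr ⟨i, j, hi, hj, hg, rfl⟩)
  have hs1 : ∀ i j : Fin m, ((i : ℕ) = 0 ∨ (i : ℕ) = 1) → (j : ℕ) = 2 →
      ⁅gD m i, ⁅gD m i, gD m j⁆⁆ = -((2 : ℂ) • gD m i) := by
    intro i j hi hj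
    exact gD_serre m (Or.inl (Or.inl (Or.inl (Or.inl (Or.inl ⟨i, j, hi, hj, rfl⟩)))))
  have hs2 : ∀ i j : Fin m, (i : ℕ) = 2 → ((j : ℕ) = 0 ∨ (j : ℕ) = 1) →
      ⁅gD m i, ⁅gD m i, gD m j⁆⁆ = -((2 : ℂ) • gD m i) := by
    intro i j hi hj
    exact gD_serre m (Or.inl (Or.inl (Or.inl (Or.inl (Or.inr ⟨i, j, hi, hj, rfl⟩)))))
  have hs5 : ∀ i j : Fin m, 2 ≤ (i : ℕ) → 2 ≤ (j : ℕ) →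
      ((i : ℕ) + 1 = (j : ℕ) ∨ (j : ℕ) + 1 = (i : ℕ)) →
      ⁅gD m i, ⁅gD m i, gD m j⁆⁆ = -((2 : ℂ) • gD m i) := by
    intro i j hi hj hg
    exact gD_serre m (Or.inl (Or.inr ⟨i, j, hi, hj, hg, rfl⟩))
  -- the free lift
  set F : FL (2 * n) →ₗ⁅ℂ⁆ eD m := FreeLieAlgebra.lift ℂ (vmap n) with hF
  have hFof : ∀ i : Fin (2 * n), F (of ℂ i) = vmap n i := fun i => lift_of_apply _ _
  -- fixed generators
  set a : eD m := gD m ⟨0, by omega⟩ with ha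
  set b : eD m := gD m ⟨1, by omega⟩ with hb
  -- key : relations vanish
  have hker : ∀ x ∈ relC (2 * n), F x = 0 := by
    intro x hx
    simp only [relC, Set.mem_union, Set.mem_setOf_eq] at hx
    rcases hx with ((⟨i, j, hg, rfl⟩ | ⟨i, j, hadj, hi0, rfl⟩) | ⟨i, j, hi, hj, rfl⟩)
    · -- commuting relations
      rw [LieHom.map_lie, hFof, hFof]
      by_cases hi : (i : ℕ) = 0
      · have hj2 : 2 ≤ (j : ℕ) := by omega
        rw [vmap, if_pos hi, vmap, if_neg (by omega)]
        rw [smul_lie, add_lie,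
          hz4 _ _ (by norm_num) (by simpa using by omega : 3 ≤ ((j : ℕ) + 1)),
          hz4 _ _ (by norm_num) (by simpa using by omega : 3 ≤ ((j : ℕ) + 1))]
        simp
      · by_cases hj : (j : ℕ) = 0
        · rw [vmap, if_neg hi, vmap, if_pos hj, ← lie_skew]
          rw [smul_lie, add_lie,
            hz4 _ _ (by norm_num) (by simpa using by omega : 3 ≤ ((i : ℕ) + 1)),
            hz4 _ _ (by norm_num) (by simpa using by omega : 3 ≤ ((i : ℕ) + 1))]
          simp
        · rw [vmap, if_neg hi, vmap, if_neg hj]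
          exact hz6 _ _ (by simpa using by omega) (by simpa using by omega)
            (by simp; omega)
    · -- Serre relations
      rw [map_add, map_smul, LieHom.map_lie, LieHom.map_lie, hFof, hFof]
      by_cases hj : (j : ℕ) = 0
      · -- i = 1, j = 0
        have hi1 : (i : ℕ) = 1 := by omega
        rw [vmap, if_neg hi0, vmap, if_pos hj]
        have c2 : ((⟨(i : ℕ) + 1, Nat.succ_lt_succ i.isLt⟩ : Fin m) : ℕ) = 2 := by
          simp [hi1]
        rw [lie_smul, lie_add, lie_smul, lie_add,
          hs2 _ _ c2 (Or.inr (by simp)), hs2 _ _ c2 (Or.inl (by simp))]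
        module
      · rw [vmap, if_neg hi0, vmap, if_neg hj]
        rw [hs5 _ _ (by simpa using by omega) (by simpa using by omega) (by simp; omega)]
        module
    · -- cubic relation : i = 0, j = 1
      rw [LieHom.map_lie, LieHom.map_lie, LieHom.map_lie, hFof, hFof]
      rw [vmap, if_pos hi, vmap, if_neg (by omega)]
      set c : eD m := gD m ⟨(j : ℕ) + 1, Nat.succ_lt_succ j.isLt⟩ with hc
      have hc2 : ((⟨(j : ℕ) + 1, Nat.succ_lt_succ j.isLt⟩ : Fin m) : ℕ) = 2 := by
        simp [hj]
      have hab : ⁅a, b⁆ = 0 := hz3 _ _ rfl rfl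
      have hba : ⁅b, a⁆ = 0 := by rw [← lie_skew, hab, neg_zero]
      have hac : ⁅a, ⁅a, c⁆⁆ = -((2 : ℂ) • a) := hs1 _ _ (Or.inl rfl) hc2
      have hbc : ⁅b, ⁅b, c⁆⁆ = -((2 : ℂ) • b) := hs1 _ _ (Or.inr rfl) hc2
      have hswap : ⁅a, ⁅b, c⁆⁆ = ⁅b, ⁅a, c⁆⁆ := by
        rw [leibniz_lie a b c, hab, zero_lie, zero_add]
      have h1 : ⁅a, ⁅b, ⁅a, c⁆⁆⁆ = 0 := by
        rw [leibniz_lie a b ⁅a, c⁆, hab, zero_lie, zero_add, hac]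
        rw [lie_neg b ((2:ℂ) • a), lie_smul (2:ℂ) b a, hba, smul_zero, neg_zero]
      have h2 : ⁅b, ⁅b, ⁅a, c⁆⁆⁆ = 0 := by
        rw [← hswap, leibniz_lie b a ⁅b, c⁆, hba, zero_lie, zero_add, hbc]
        rw [lie_neg a ((2:ℂ) • b), lie_smul (2:ℂ) a b, hab, smul_zero, neg_zero]
      have hbbb : ⁅b, ⁅b, ⁅b, c⁆⁆⁆ = 0 := by rw [hbc, lie_neg b ((2:ℂ) • b), lie_smul (2:ℂ) b b, lie_self, smul_zero, neg_zero]
      have hbab : ⁅b, ⁅a, ⁅b, c⁆⁆⁆ = 0 := by rw [hswap]; exact h2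
      have hbaa : ⁅b, ⁅a, ⁅a, c⁆⁆⁆ = 0 := by rw [hac, lie_neg b ((2:ℂ) • a), lie_smul (2:ℂ) b a, hba, smul_zero, neg_zero]
      have habb : ⁅a, ⁅b, ⁅b, c⁆⁆⁆ = 0 := by rw [hbc, lie_neg a ((2:ℂ) • b), lie_smul (2:ℂ) a b, hab, smul_zero, neg_zero]
      have haab : ⁅a, ⁅a, ⁅b, c⁆⁆⁆ = 0 := by rw [hswap]; exact h1
      have haaa : ⁅a, ⁅a, ⁅a, c⁆⁆⁆ = 0 := by rw [hac, lie_neg a ((2:ℂ) • a), lie_smul (2:ℂ) a a, lie_self, smul_zero, neg_zero]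
      rw [← ha, ← hb]
      simp only [smul_lie, lie_smul, add_lie, lie_add, hbbb, hbab, hbaa, habb, haab, haaa,
        h1, h2, smul_zero, add_zero, zero_add, smul_add]
  -- assemble
  have hker' : ∀ x ∈ LieSubmodule.lieSpan ℂ (FL (2 * n)) (relC (2 * n)), F x = 0 := by
    intro x hx
    have hle : LieSubmodule.lieSpan ℂ (FL (2 * n)) (relC (2 * n)) ≤ F.ker :=
      (LieSubmodule.lieSpan_le).2 (fun y hy => LieHom.mem_ker.2 (hker y hy))
    exact LieHom.mem_ker.1 (hle hx)
  refine ⟨lieQuotLift _ F hker', ?_, ?_⟩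
  · rw [gC, lieQuotLift_mk, hFof, vmap, if_pos rfl]
  · intro k hk2 hk
    rw [gC, lieQuotLift_mk, hFof, vmap, if_neg (by simp; omega)]
    congr 1
    exact Fin.ext (by simp; omega)
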